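/- arXiv:1901.01797 — 6 statements merged into one kernel-verified Lean document; each statement's English description precedes it below -/
import Mathlib

section
/- Let G be a finite simple graph and P ⊆ V(G). A layering λ of the induced subgraph G[P] extends to a layering of G if and only if λ is G-geodesic. -/
/-- A layering of a simple graph: adjacent vertices differ by at most 1. -/
def IsLayering {V : Type*} (G : SimpleGraph V) (lam : V → ℤ) : Prop :=
  ∀ ⦃u v : V⦄, G.Adj u v → |lam u - lam v| ≤ 1

lemma layering_walk_bound {V : Type*} {G : SimpleGraph V} {lam : V → ℤ}
    (h : IsLayering G lam) : ∀ {x y : V} (p : G.Walk x y),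
    |lam x - lam y| ≤ (p.length : ℤ) := by
  intro x y p
  induction p with
  | nil => simp
  | cons hadj p ih =>
    rename_i u v w
    calc |lam u - lam w| ≤ |lam u - lam v| + |lam v - lam w| := abs_sub_le _ _ _
      _ ≤ 1 + p.length := add_le_add (h hadj) ih
      _ = ((p.length + 1 : ℕ) : ℤ) := by push_cast; ring
    
/-- A layering of the induced subgraph `G[P]` extends to a layering of `G`
iff it is `G`-geodesic. -/
theorem stmt_0 {V : Type*} [Fintype V] (G : SimpleGraph V) (P : Set V)
    (lam : V → ℤ)
    (hlay : ∀ u ∈ P, ∀ v ∈ P, G.Adj u v → |lam u - lam v| ≤ 1) :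
    (∃ lam' : V → ℤ, IsLayering G lam' ∧ ∀ x ∈ P, lam' x = lam x) ↔
      (∀ x ∈ P, ∀ y ∈ P, G.Reachable x y → |lam x - lam y| ≤ (G.dist x y : ℤ)) := by
  classical
  constructor
  · rintro ⟨lam', hl, hagree⟩ x hx y hy hr
    obtain ⟨p, hp⟩ := hr.exists_walk_length_eq_dist
    rw [← hagree x hx, ← hagree y hy, ← hp]
    exact layering_walk_bound hl p
  · intro hgeo
    set F : V → Finset V := fun v => Set.toFinset {x | x ∈ P ∧ G.Reachable x v} with hF
    have hmemF : ∀ v x, x ∈ F v ↔ x ∈ P ∧ G.Reachable x v := by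
      intro v x; simp [hF, Set.mem_toFinset]
    have hFadj : ∀ {u v : V}, G.Adj u v → F u = F v := by
      intro u v huv
      ext x
      rw [hmemF, hmemF]
      exact and_congr_right fun _ =>
        ⟨fun h => h.trans huv.reachable, fun h => h.trans huv.symm.reachable⟩
    set lam' : V → ℤ := fun v =>
      if h : (F v).Nonempty then (F v).inf' h (fun x => lam x + (G.dist x v : ℤ)) else 0
      with hlam'
    have hdist_adj : ∀ {x u v : V}, G.Reachable x v → G.Adj v u →
        (G.dist x u : ℤ) ≤ (G.dist x v : ℤ) + 1 := by
      intro x u v hr hadj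
      obtain ⟨p, hp⟩ := hr.exists_walk_length_eq_dist
      have := G.dist_le (p.concat hadj)
      rw [SimpleGraph.Walk.length_concat, hp] at this
      exact_mod_cast this
    refine ⟨lam', ?_, ?_⟩
    · intro u v huv
      by_cases h : (F u).Nonempty
      · have hv : (F v).Nonempty := hFadj huv ▸ h
        have key : ∀ {a b : V}, G.Adj a b → (hb : (F b).Nonempty) → (ha : (F a).Nonempty) →
            lam' a ≤ lam' b + 1 := by
          intro a b hab hb ha
          obtain ⟨x, hxmem, hxeq⟩ := Finset.exists_mem_eq_inf' hb
            (fun x => lam x + (G.dist x b : ℤ))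
          have hxa : x ∈ F a := hFadj hab ▸ hxmem
          have hreach : G.Reachable x b := ((hmemF b x).mp hxmem).2
          calc lam' a ≤ lam x + (G.dist x a : ℤ) := by
                simp only [lam', dif_pos ha]; exact Finset.inf'_le _ hxa
            _ ≤ lam x + ((G.dist x b : ℤ) + 1) :=
                add_le_add le_rfl (hdist_adj hreach hab.symm)
            _ = lam' b + 1 := by simp only [lam', dif_pos hb, hxeq]; ring
        have h1 := key huv hv h
        have h2 := key huv.symm h hv
        rw [abs_sub_le_iff]
        omega
      · have hv : ¬ (F v).Nonempty := hFadj huv ▸ h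
        simp [hlam', dif_neg h, dif_neg hv]
    · intro x hx
      have hxF : x ∈ F x := (hmemF x x).mpr ⟨hx, SimpleGraph.Reachable.refl x⟩
      have hne : (F x).Nonempty := ⟨x, hxF⟩
      simp only [lam', dif_pos hne]
      apply le_antisymm
      · have := Finset.inf'_le (fun y => lam y + (G.dist y x : ℤ)) hxF
        exact this.trans (by simp)
      · apply Finset.le_inf'
        intro y hy
        obtain ⟨hyP, hyr⟩ := (hmemF x y).mp hy
        have := hgeo x hx y hyP hyr.symm
        rw [abs_sub_le_iff] at this
        have hcomm : G.dist x y = G.dist y x := G.dist_comm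
        omega
end

section
/- If C is a Baker class of ordered graphs, then for every integer d ≥ 1 the class C^(d) is a Baker class. -/
/-- The spanning subgraph of `G` keeping only the edges with both ends in `U`.
Reachability and distances between vertices of `U` in this graph coincide with those
in the induced subgraph `G[U]`. -/
def restrictSet {V : Type*} (G : SimpleGraph V) (U : Set V) : SimpleGraph V where
  Adj u v := G.Adj u v ∧ u ∈ U ∧ v ∈ U
  symm := ⟨fun _ _ ⟨h, hu, hv⟩ => ⟨h.symm, hv, hu⟩⟩
  loopless := ⟨fun u ⟨h, _, _⟩ => G.loopless.irrefl u h⟩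

/-- `BakerWins G t S r` : Destroyer wins the Baker game in at most `t` rounds on the state
whose ordered graph is the subgraph of `G` induced on `S` (with the inherited vertex order)
and whose sequence is `r` (0-indexed: `r 0` is the first term `r₁`).
If the vertex set is empty, Destroyer has won; otherwise he needs `t ≥ 1` and either
(Delete) he wins on the graph minus its smallest vertex with the tail of the sequence, or
(Restrict) there is a layering `lam` of the current graph such that for every interval of
at most `r 0` consecutive integers, he wins on the induced subgraph on the corresponding
layers with the tail of the sequence. -/
def BakerWins {V : Type*} [LinearOrder V] (G : SimpleGraph V) :
    ℕ → Set V → (ℕ → ℕ) → Prop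
  | 0, S, _ => S = ∅
  | t + 1, S, r => S = ∅ ∨
      ((∃ v ∈ S, (∀ u ∈ S, v ≤ u) ∧ BakerWins G t (S \ {v}) (fun i => r (i + 1))) ∨
       (∃ lam : V → ℤ,
          (∀ u ∈ S, ∀ w ∈ S, G.Adj u w → |lam u - lam w| ≤ 1) ∧
          ∀ a b : ℤ, b + 1 ≤ a + (r 0 : ℤ) →
            BakerWins G t {v | v ∈ S ∧ lam v ∈ Set.Icc a b} (fun i => r (i + 1))))

/-- An ordered graph: a finite simple graph with a linear order on its vertices. -/
structure OrderedGraph : Type 1 where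
  V : Type
  [fin : Fintype V]
  [ord : LinearOrder V]
  graph : SimpleGraph V

attribute [instance] OrderedGraph.fin OrderedGraph.ord

/-- A class of ordered graphs is a Baker class if for every infinite sequence of positive
integers `r` there is `t` such that Destroyer wins the Baker game on `(G, r)` in `t` rounds
for every `G` in the class. -/
def IsBakerClass (C : Set OrderedGraph) : Prop :=
  ∀ r : ℕ → ℕ, (∀ i, 0 < r i) → ∃ t : ℕ, ∀ O ∈ C, BakerWins O.graph t Set.univ r

/-- The quotient graph `G/𝒫` of an ordered graph by a partition `P : Fin m → Set O.V`:
vertex `i` is adjacent to vertex `j` iff `i ≠ j` and some `u ∈ P i`, `v ∈ P j` are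
adjacent in `G`. -/
def quotGraph (O : OrderedGraph) (m : ℕ) (P : Fin m → Set O.V) : SimpleGraph (Fin m) where
  Adj i j := i ≠ j ∧ ∃ u ∈ P i, ∃ v ∈ P j, O.graph.Adj u v
  symm := by
    constructor
    rintro i j ⟨hij, u, hu, v, hv, huv⟩
    exact ⟨hij.symm, v, hv, u, hu, huv.symm⟩
  loopless := by constructor; rintro i ⟨hii, -⟩; exact hii rfl

/-- The quotient ordered graph `G/𝒫`, on `Fin m` with its natural order. -/
def OrderedGraph.quot (O : OrderedGraph) (m : ℕ) (P : Fin m → Set O.V) : OrderedGraph where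
  V := Fin m
  graph := quotGraph O m P

/-- The class `C^(d)`: ordered graphs admitting a width-`d` geodesic partition
`P₁, …, P_m` (each `G[P i]` has a layering which is geodesic with respect to
`G[P i ∪ ⋯ ∪ P m]` and has width at most `d`) whose quotient belongs to `C`. -/
def Cpow (C : Set OrderedGraph) (d : ℕ) : Set OrderedGraph :=
  {O | ∃ (m : ℕ) (P : Fin m → Set O.V),
    (∀ i, (P i).Nonempty) ∧
    (∀ i j, i ≠ j → Disjoint (P i) (P j)) ∧
    (⋃ i, P i) = Set.univ ∧
    (∀ i j : Fin m, i < j → ∀ u ∈ P i, ∀ v ∈ P j, u < v) ∧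
    (∀ i : Fin m, ∃ lam : O.V → ℤ,
      (∀ x ∈ P i, ∀ y ∈ P i, O.graph.Adj x y → |lam x - lam y| ≤ 1) ∧
      (∀ x ∈ P i, ∀ y ∈ P i,
        (restrictSet O.graph (⋃ j ∈ Set.Ici i, P j)).Reachable x y →
          |lam x - lam y| ≤ ((restrictSet O.graph (⋃ j ∈ Set.Ici i, P j)).dist x y : ℤ)) ∧
      (∀ z : ℤ, ({v | v ∈ P i ∧ lam v = z}).ncard ≤ d)) ∧
    O.quot m P ∈ C}

section AuxGame
variable {V : Type*} [LinearOrder V] {G : SimpleGraph V}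

lemma bakerWins_empty (t : ℕ) (r : ℕ → ℕ) : BakerWins G t (∅ : Set V) r := by
  cases t with
  | zero => rfl
  | succ t => exact Or.inl rfl

lemma bakerWins_succ : ∀ (t : ℕ) (S : Set V) (r : ℕ → ℕ),
    BakerWins G t S r → BakerWins G (t + 1) S r := by
  intro t
  induction t with
  | zero => intro S r h; exact Or.inl h
  | succ t ih =>
    intro S r h
    rcases h with h | ⟨v, hv, hmin, hw⟩ | ⟨lam, hlam, h⟩
    · exact Or.inl h
    · exact Or.inr (Or.inl ⟨v, hv, hmin, ih _ _ hw⟩)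
    · exact Or.inr (Or.inr ⟨lam, hlam, fun a b hab => ih _ _ (h a b hab)⟩)

lemma bakerWins_mono {t t' : ℕ} (h : t ≤ t') {S : Set V} {r : ℕ → ℕ}
    (hw : BakerWins G t S r) : BakerWins G t' S r := by
  induction h with
  | refl => exact hw
  | step _ ih => exact bakerWins_succ _ _ _ ih

lemma bakerWins_pass {t : ℕ} {S : Set V} {r : ℕ → ℕ}
    (h : BakerWins G t S (fun i => r (i + 1))) : BakerWins G (t + 1) S r := by
  refine Or.inr (Or.inr ⟨fun _ => 0, fun u _ w _ _ => by simp, fun a b _ => ?_⟩)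
  by_cases h0 : (0 : ℤ) ∈ Set.Icc a b
  · have hS : {v | v ∈ S ∧ (fun _ => (0:ℤ)) v ∈ Set.Icc a b} = S := by
      ext v; simp [h0]
    rw [hS]; exact h
  · have hS : {v | v ∈ S ∧ (fun _ => (0:ℤ)) v ∈ Set.Icc a b} = ∅ := by
      ext v; simp [h0]
    rw [hS]; exact bakerWins_empty _ _

lemma bakerWins_pad (p : ℕ) : ∀ {t : ℕ} {S : Set V} (r : ℕ → ℕ),
    BakerWins G t S (fun i => r (i + p)) → BakerWins G (t + p) S r := by
  induction p with
  | zero => intro t S r h; exact h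
  | succ p ih =>
    intro t S r h
    exact bakerWins_pass (ih (fun i => r (i + 1)) h)

lemma bakerWins_deleteMany [Fintype V] : ∀ (n t : ℕ) (F S : Set V) (r : ℕ → ℕ),
    F ⊆ S → F.ncard ≤ n → (∀ f ∈ F, ∀ s ∈ S, s ∉ F → f ≤ s) →
    BakerWins G t (S \ F) (fun i => r (i + n)) → BakerWins G (t + n) S r := by
  intro n
  induction n with
  | zero =>
    intro t F S r hFS hcard _ hw
    have hF : F = ∅ := by
      rw [← Set.ncard_eq_zero F.toFinite]; omega
    subst hF; simpa using hw
  | succ n ih =>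
    intro t F S r hFS hcard hord hw
    rcases F.eq_empty_or_nonempty with rfl | hne
    · exact bakerWins_pad (n + 1) r (by simpa using hw)
    · obtain ⟨v, hvF, hvmin⟩ := Set.exists_min_image F id F.toFinite hne
      refine bakerWins_mono (le_of_eq (by omega)) (?_ : BakerWins G (t + n + 1) S r)
      refine Or.inr (Or.inl ⟨v, hFS hvF, ?_, ?_⟩)
      · intro u hu
        by_cases huF : u ∈ F
        · exact hvmin u huF
        · exact hord v hvF u hu huF
      · have hset : (S \ {v}) \ (F \ {v}) = S \ F := by
          ext x
          simp only [Set.mem_diff, Set.mem_singleton_iff]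
          constructor
          · rintro ⟨⟨hxS, hxv⟩, hx⟩
            exact ⟨hxS, fun hxF => hx ⟨hxF, hxv⟩⟩
          · rintro ⟨hxS, hxF⟩
            exact ⟨⟨hxS, fun h => hxF (h ▸ hvF)⟩, fun h => hxF h.1⟩
        refine ih t (F \ {v}) (S \ {v}) (fun i => r (i + 1)) ?_ ?_ ?_ ?_
        · exact Set.diff_subset_diff_left hFS
        · have := Set.ncard_diff_singleton_add_one hvF F.toFinite
          omega
        · rintro f ⟨hfF, hfv⟩ s ⟨hsS, hsv⟩ hs
          by_cases hsF : s ∈ F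
          · exact absurd ⟨hsF, hsv⟩ hs
          · exact hord f hfF s hsS hsF
        · rw [hset]; exact hw

end AuxGame

section ExtLayer
variable {V : Type*} [Fintype V] {H : SimpleGraph V} {A : Set V} {f : V → ℤ}

/-- the set of candidate values at `v` -/
def candSet (H : SimpleGraph V) (A : Set V) (f : V → ℤ) (v : V) : Set ℤ :=
  {z : ℤ | ∃ a ∈ A, H.Reachable a v ∧ z = f a + H.dist a v}

open Classical in
noncomputable def extLayer (H : SimpleGraph V) (A : Set V) (f : V → ℤ) (v : V) : ℤ :=
  if h : (candSet H A f v).Nonempty then sInf (candSet H A f v) else 0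

lemma candSet_finite (v : V) : (candSet H A f v).Finite := by
  refine Set.Finite.subset (A.toFinite.image (fun a => f a + H.dist a v)) ?_
  rintro z ⟨a, ha, _, rfl⟩
  exact ⟨a, ha, rfl⟩

lemma extLayer_le {a v : V} (ha : a ∈ A) (hr : H.Reachable a v) :
    extLayer H A f v ≤ f a + H.dist a v := by
  have hmem : f a + (H.dist a v : ℤ) ∈ candSet H A f v := ⟨a, ha, hr, rfl⟩
  rw [extLayer, dif_pos ⟨_, hmem⟩]
  exact csInf_le (candSet_finite v).bddBelow hmem

lemma extLayer_adj {u v : V} (huv : H.Adj u v) :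
    |extLayer H A f u - extLayer H A f v| ≤ 1 := by
  have key : ∀ x y : V, H.Adj x y → extLayer H A f y ≤ extLayer H A f x + 1 := by
    intro x y hxy
    by_cases hx : (candSet H A f x).Nonempty
    · obtain ⟨a, ha, har, heq⟩ := hx.csInf_mem (candSet_finite x)
      have hry : H.Reachable a y := har.trans hxy.reachable
      have hdist : H.dist a y ≤ H.dist a x + 1 := by
        obtain ⟨p, hp⟩ := har.exists_walk_length_eq_dist
        calc H.dist a y ≤ (p.concat hxy).length := SimpleGraph.dist_le _
          _ = p.length + 1 := SimpleGraph.Walk.length_concat _ _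
          _ = _ := by rw [hp]
      have h1 : extLayer H A f y ≤ f a + H.dist a y := extLayer_le ha hry
      have h2 : extLayer H A f x = f a + H.dist a x := by
        rw [extLayer, dif_pos hx]; exact heq
      omega
    · have hy : ¬ (candSet H A f y).Nonempty := by
        rintro ⟨z, a, ha, hr, _⟩
        exact hx ⟨f a + H.dist a x, a, ha, hr.trans hxy.symm.reachable, rfl⟩
      simp [extLayer, hx, hy]
  have k1 := key u v huv
  have k2 := key v u huv.symm
  rw [abs_le]; omega

lemma extLayer_eq {v : V} (hv : v ∈ A)
    (hgeo : ∀ a ∈ A, H.Reachable a v → f v - f a ≤ (H.dist a v : ℤ)) :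
    extLayer H A f v = f v := by
  have hmem : f v ∈ candSet H A f v := ⟨v, hv, SimpleGraph.Reachable.refl v, by
    rw [SimpleGraph.dist_self]; simp⟩
  rw [extLayer, dif_pos ⟨_, hmem⟩]
  refine le_antisymm (csInf_le (candSet_finite v).bddBelow hmem) (le_csInf ⟨_, hmem⟩ ?_)
  rintro z ⟨a, ha, hr, rfl⟩
  have := hgeo a ha hr
  omega

end ExtLayer

lemma dist_mono_of_le {V : Type*} {H G' : SimpleGraph V} (h : H ≤ G') {x y : V}
    (hr : H.Reachable x y) : G'.dist x y ≤ H.dist x y := by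
  obtain ⟨p, hp⟩ := hr.exists_walk_length_eq_dist
  calc G'.dist x y ≤ (p.mapLe h).length := SimpleGraph.dist_le _
    _ = p.length := by simp [SimpleGraph.Walk.mapLe]
    _ = _ := hp

def posFun (d : ℕ) : (ℕ → ℕ) → ℕ → ℕ
  | _, 0 => 0
  | s, k + 1 => 1 + d * s 0 + posFun d (fun i => s (i + (1 + d * s 0))) k

def qseq (d : ℕ) : (ℕ → ℕ) → ℕ → ℕ
  | s, 0 => s 0
  | s, k + 1 => qseq d (fun i => s (i + (1 + d * s 0))) k

lemma qseq_pos (d : ℕ) : ∀ (k : ℕ) (s : ℕ → ℕ), (∀ i, 0 < s i) → 0 < qseq d s k := by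
  intro k
  induction k with
  | zero => intro s hs; exact hs 0
  | succ k ih => intro s hs; exact ih _ (fun i => hs _)

lemma qseq_tail (d : ℕ) (s : ℕ → ℕ) :
    (fun j => qseq d s (j + 1)) = qseq d (fun i => s (i + (1 + d * s 0))) := rfl
lemma sim {V : Type*} [Fintype V] [LinearOrder V] (G : SimpleGraph V) (m : ℕ)
    (P : Fin m → Set V) (d : ℕ)
    (hdis : ∀ i j, i ≠ j → Disjoint (P i) (P j))
    (hord : ∀ i j : Fin m, i < j → ∀ u ∈ P i, ∀ v ∈ P j, u < v)
    (lam : Fin m → V → ℤ)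
    (hgeo : ∀ i, ∀ x ∈ P i, ∀ y ∈ P i,
        (restrictSet G (⋃ j ∈ Set.Ici i, P j)).Reachable x y →
        |lam i x - lam i y| ≤ ((restrictSet G (⋃ j ∈ Set.Ici i, P j)).dist x y : ℤ))
    (hwid : ∀ i, ∀ z : ℤ, ({v | v ∈ P i ∧ lam i v = z}).ncard ≤ d)
    (Q : SimpleGraph (Fin m))
    (hQ : ∀ (i j : Fin m), i ≠ j → ∀ u ∈ P i, ∀ v ∈ P j, G.Adj u v → Q.Adj i j) :
    ∀ (t : ℕ) (s : ℕ → ℕ) (S : Set V) (T : Set (Fin m)),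
      (∀ v ∈ S, ∃ i ∈ T, v ∈ P i) →
      BakerWins Q t T (qseq d s) → BakerWins G (posFun d s t) S s := by
  classical
  intro t
  induction t with
  | zero =>
    intro s S T hST hT
    have hTe : T = ∅ := hT
    have hSe : S = ∅ := by
      rw [Set.eq_empty_iff_forall_notMem]
      intro v hv
      obtain ⟨i, hiT, _⟩ := hST v hv
      rw [hTe] at hiT
      exact hiT
    rw [hSe]
    exact bakerWins_empty _ _
  | succ t ih =>
    intro s S T hST hT
    set s' : ℕ → ℕ := fun i => s (i + (1 + d * s 0)) with hs'
    have hnum : posFun d s (t + 1) = (d * s 0 + posFun d s' t) + 1 := by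
      show 1 + d * s 0 + posFun d s' t = _
      omega
    rw [hnum]
    rcases hT with hTe | ⟨i, hiT, himin, hdel⟩ | ⟨μ, hμ, hres⟩
    · -- empty quotient state
      have hSe : S = ∅ := by
        rw [Set.eq_empty_iff_forall_notMem]
        intro v hv
        obtain ⟨j, hjT, _⟩ := hST v hv
        rw [hTe] at hjT
        exact hjT
      rw [hSe]
      exact bakerWins_empty _ _
    · -- quotient Delete at minimal index i
      rw [qseq_tail] at hdel
      set big : Set V := ⋃ j ∈ Set.Ici i, P j with hbig
      have hSbig : S ⊆ big := by
        intro v hv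
        obtain ⟨j, hjT, hvj⟩ := hST v hv
        exact Set.mem_biUnion (himin j hjT) hvj
      set H : SimpleGraph V := restrictSet G S with hH
      have hHle : H ≤ restrictSet G big := by
        rintro u v ⟨h, hu, hv⟩
        exact ⟨h, hSbig hu, hSbig hv⟩
      set A : Set V := S ∩ P i with hA
      set f : V → ℤ := lam i with hf
      set Λ : V → ℤ := extLayer H A f with hΛdef
      -- geodesic transfer to H
      have hgeoH : ∀ x ∈ A, ∀ y ∈ A, H.Reachable x y → |f x - f y| ≤ (H.dist x y : ℤ) := by
        intro x hx y hy hr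
        have hrb : (restrictSet G big).Reachable x y := hr.mono hHle
        have h1 := hgeo i x hx.2 y hy.2 hrb
        have h2 : (restrictSet G big).dist x y ≤ H.dist x y := dist_mono_of_le hHle hr
        calc |f x - f y| ≤ ((restrictSet G big).dist x y : ℤ) := h1
          _ ≤ (H.dist x y : ℤ) := by exact_mod_cast h2
      -- agreement on A
      have hagree : ∀ v ∈ A, Λ v = f v := by
        intro v hv
        refine extLayer_eq hv ?_
        intro a ha hr
        have := hgeoH v hv a ha hr.symm
        rw [SimpleGraph.dist_comm] at this
        rw [abs_le] at this
        omega
      -- the restrict move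
      refine Or.inr (Or.inr ⟨Λ, ?_, ?_⟩)
      · intro u hu w hw hadj
        exact extLayer_adj ⟨hadj, hu, hw⟩
      · intro a b hab
        set SI : Set V := {v | v ∈ S ∧ Λ v ∈ Set.Icc a b} with hSI
        set F : Set V := SI ∩ P i with hF
        -- cardinality of F
        have hFcard : F.ncard ≤ d * s 0 := by
          rw [Set.ncard_eq_toFinset_card']
          have hmaps : ∀ v ∈ F.toFinset, lam i v ∈ Finset.Icc a b := by
            intro v hv
            rw [Set.mem_toFinset] at hv
            have hvA : v ∈ A := ⟨hv.1.1, hv.2⟩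
            have := hagree v hvA
            have hIcc := hv.1.2
            rw [this] at hIcc
            rw [Finset.mem_Icc]
            exact ⟨hIcc.1, hIcc.2⟩
          have hfib : ∀ z ∈ Finset.Icc a b,
              (F.toFinset.filter (fun v => lam i v = z)).card ≤ d := by
            intro z _
            calc (F.toFinset.filter (fun v => lam i v = z)).card
                ≤ ({v | v ∈ P i ∧ lam i v = z}).toFinset.card := by
                  apply Finset.card_le_card
                  intro v hv
                  rw [Finset.mem_filter, Set.mem_toFinset] at hv
                  rw [Set.mem_toFinset]
                  exact ⟨hv.1.2, hv.2⟩
              _ = ({v | v ∈ P i ∧ lam i v = z}).ncard := (Set.ncard_eq_toFinset_card' _).symm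
              _ ≤ d := hwid i z
          calc F.toFinset.card ≤ d * (Finset.Icc a b).card :=
                Finset.card_le_mul_card_image_of_maps_to hmaps d hfib
            _ ≤ d * s 0 := by
                apply Nat.mul_le_mul_left
                rw [Int.card_Icc]
                omega
        -- ordering of F
        have hFord : ∀ x ∈ F, ∀ u ∈ SI, u ∉ F → x ≤ u := by
          rintro x ⟨hxSI, hxPi⟩ u huSI huF
          obtain ⟨j, hjT, hujP⟩ := hST u huSI.1
          have hji : j ≠ i := by
            rintro rfl
            exact huF ⟨huSI, hujP⟩
          have : i < j := lt_of_le_of_ne (himin j hjT) (Ne.symm hji)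
          exact le_of_lt (hord i j this x hxPi u hujP)
        -- apply IH + deleteMany
        have hinv : ∀ v ∈ SI \ F, ∃ j ∈ T \ {i}, v ∈ P j := by
          rintro v ⟨hvSI, hvF⟩
          obtain ⟨j, hjT, hvj⟩ := hST v hvSI.1
          refine ⟨j, ⟨hjT, ?_⟩, hvj⟩
          rintro rfl
          exact hvF ⟨hvSI, hvj⟩
        have hIH : BakerWins G (posFun d s' t) (SI \ F) s' := ih s' (SI \ F) (T \ {i}) hinv hdel
        have hIH' : BakerWins G (posFun d s' t) (SI \ F)
            (fun j => (fun i => s (i + 1)) (j + d * s 0)) := by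
          have : (fun j => (fun i => s (i + 1)) (j + d * s 0)) = s' := by
            funext j
            simp only [hs']
            congr 1
            omega
          rw [this]
          exact hIH
        have := bakerWins_deleteMany (d * s 0) (posFun d s' t) F SI (fun i => s (i + 1))
          Set.inter_subset_left hFcard hFord hIH'
        exact bakerWins_mono (le_of_eq (by omega)) this
    · -- quotient Restrict with μ
      rw [qseq_tail] at hres
      set Λ : V → ℤ := fun v => if h : ∃ j, v ∈ P j then μ h.choose else 0 with hΛdef
      have hpart : ∀ v ∈ S, ∃ j ∈ T, v ∈ P j ∧ Λ v = μ j := by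
        intro v hv
        obtain ⟨j, hjT, hvj⟩ := hST v hv
        have hex : ∃ k, v ∈ P k := ⟨j, hvj⟩
        have hch : hex.choose = j := by
          by_contra hne
          exact Set.disjoint_left.mp (hdis _ _ hne) hex.choose_spec hvj
        refine ⟨j, hjT, hvj, ?_⟩
        simp only [hΛdef, dif_pos hex, hch]
      refine Or.inr (Or.inr ⟨Λ, ?_, ?_⟩)
      · intro u hu w hw hadj
        obtain ⟨ju, hjuT, hujP, hΛu⟩ := hpart u hu
        obtain ⟨jw, hjwT, hwjP, hΛw⟩ := hpart w hw
        rw [hΛu, hΛw]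
        by_cases hjj : ju = jw
        · rw [hjj]; simp
        · exact hμ ju hjuT jw hjwT (hQ ju jw hjj u hujP w hwjP hadj)
      · intro a b hab
        set SI : Set V := {v | v ∈ S ∧ Λ v ∈ Set.Icc a b} with hSI
        set T' : Set (Fin m) := {j | j ∈ T ∧ μ j ∈ Set.Icc a b} with hT'
        have hq0 : qseq d s 0 = s 0 := rfl
        have hwinQ : BakerWins Q t T' (qseq d s') := hres a b (by rw [hq0] at *; exact hab)
        have hinv : ∀ v ∈ SI, ∃ j ∈ T', v ∈ P j := by
          rintro v ⟨hvS, hvI⟩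
          obtain ⟨j, hjT, hvj, hΛv⟩ := hpart v hvS
          exact ⟨j, ⟨hjT, hΛv ▸ hvI⟩, hvj⟩
        have hIH : BakerWins G (posFun d s' t) SI s' := ih s' SI T' hinv hwinQ
        have hIH' : BakerWins G (posFun d s' t) SI
            (fun j => (fun i => s (i + 1)) (j + d * s 0)) := by
          have : (fun j => (fun i => s (i + 1)) (j + d * s 0)) = s' := by
            funext j
            simp only [hs']
            congr 1
            omega
          rw [this]
          exact hIH
        have := bakerWins_pad (d * s 0) (fun i => s (i + 1)) hIH'
        exact bakerWins_mono (le_of_eq (by omega)) this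

/-- If `C` is a Baker class, then `C^(d)` is a Baker class for every integer `d ≥ 1`. -/
theorem stmt_3 (C : Set OrderedGraph) (hC : IsBakerClass C) (d : ℕ) (hd : 1 ≤ d) :
    IsBakerClass (Cpow C d) := by
  intro r hr
  obtain ⟨t, ht⟩ := hC (qseq d r) (fun i => qseq_pos d i r hr)
  refine ⟨posFun d r t, ?_⟩
  rintro O ⟨m, P, hne, hdis, hcov, hordP, hlay, hqC⟩
  choose lam hlam1 hlam2 hlam3 using hlay
  have hQ : ∀ (i j : Fin m), i ≠ j → ∀ u ∈ P i, ∀ v ∈ P j,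
      O.graph.Adj u v → (quotGraph O m P).Adj i j :=
    fun i j hij u hu v hv hadj => ⟨hij, u, hu, v, hv, hadj⟩
  have hinv : ∀ v ∈ (Set.univ : Set O.V), ∃ i ∈ (Set.univ : Set (Fin m)), v ∈ P i := by
    intro v _
    have hv : v ∈ ⋃ i, P i := hcov ▸ Set.mem_univ v
    obtain ⟨i, hi⟩ := Set.mem_iUnion.mp hv
    exact ⟨i, Set.mem_univ i, hi⟩
  have hwin := ht (O.quot m P) hqC
  exact sim O.graph m P d hdis hordP lam hlam2 hlam3 (quotGraph O m P) hQ t r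
    Set.univ Set.univ hinv hwin
end

section
/- Let G be a chordal ordered graph with vertex order ≺. If P = v₁v₂…v_k is an induced path in G and v₁ ≺ v_i for every i with 2 ≤ i ≤ k, then v₁ ≺ v₂ ≺ … ≺ v_k. -/
/-- A graph with an ordered vertex set is chordal (as an ordered graph) if for every
vertex `v` the neighbors of `v` smaller than `v` induce a clique. -/
def ChordalOrdered {V : Type*} [LinearOrder V] (G : SimpleGraph V) : Prop :=
  ∀ ⦃v u w : V⦄, G.Adj v u → G.Adj v w → u < v → w < v → u ≠ w → G.Adj u w

/-- If `v 0, v 1, …, v k` is an induced path in a chordal ordered graph `G` and `v 0`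
is smaller than all the other vertices of the path, then the path is increasing in
the vertex order. -/
theorem stmt_5 {V : Type*} [Fintype V] [LinearOrder V] (G : SimpleGraph V)
    (hG : ChordalOrdered G) (k : ℕ) (v : Fin (k + 1) → V)
    (hinj : Function.Injective v)
    (hpath : ∀ i j : Fin (k + 1), G.Adj (v i) (v j) ↔ (i.val + 1 = j.val ∨ j.val + 1 = i.val))
    (hmin : ∀ i : Fin (k + 1), i ≠ 0 → v 0 < v i) :
    StrictMono v := by
  have key : ∀ n : ℕ, ∀ h : n + 1 < k + 1,
      v ⟨n, Nat.lt_of_succ_lt h⟩ < v ⟨n + 1, h⟩ := by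
    intro n
    induction n with
    | zero =>
      intro h
      have h0 : (⟨0, Nat.lt_of_succ_lt h⟩ : Fin (k+1)) = 0 := rfl
      rw [h0]
      exact hmin ⟨1, h⟩ (by simp [Fin.ext_iff])
    | succ n ih =>
      intro h
      have h' : n + 1 < k + 1 := Nat.lt_of_succ_lt h
      have h'' : n < k + 1 := Nat.lt_of_succ_lt h'
      have prev : v ⟨n, h''⟩ < v ⟨n + 1, h'⟩ := ih h'
      by_contra hle
      push_neg at hle
      have hne : v ⟨n + 2, h⟩ ≠ v ⟨n + 1, h'⟩ := fun he => by
        have := hinj he; simp [Fin.ext_iff] at this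
      have hlt : v ⟨n + 2, h⟩ < v ⟨n + 1, h'⟩ := lt_of_le_of_ne hle hne
      have a1 : G.Adj (v ⟨n + 1, h'⟩) (v ⟨n, h''⟩) := (hpath _ _).2 (Or.inr rfl)
      have a2 : G.Adj (v ⟨n + 1, h'⟩) (v ⟨n + 2, h⟩) := (hpath _ _).2 (Or.inl rfl)
      have hne2 : v ⟨n, h''⟩ ≠ v ⟨n + 2, h⟩ := fun he => by
        have := hinj he; simp [Fin.ext_iff] at this
      have := (hpath _ _).1 (hG a1 a2 prev hlt hne2)
      simp only [] at this
      omega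
  rw [Fin.strictMono_iff_lt_succ]
  intro i
  exact key i.val i.succ.isLt
end

section
/- Let d ≥ 1 be an integer and β ≥ 1 a real number, and let G be a finite simple graph that embeds in ℝ^d with distortion β, equipped with an arbitrary linear order on its vertices. Then for every infinite sequence r = r₁, r₂, … of positive integers and every integer t with t ≥ d + ∏_{i=1}^d (β r_i + 1), Destroyer wins the Baker game on (G, r) in t rounds. -/

private lemma floor_eq_abs_lt {x y : ℝ} (h : ⌊x⌋ = ⌊y⌋) : |x - y| < 1 := by
  have hx1 : (⌊x⌋:ℝ) ≤ x := Int.floor_le x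
  have hx2 : x < ⌊x⌋ + 1 := Int.lt_floor_add_one x
  have hy1 : (⌊y⌋:ℝ) ≤ y := Int.floor_le y
  have hy2 : y < ⌊y⌋ + 1 := Int.lt_floor_add_one y
  rw [h] at hx1 hx2
  rw [abs_sub_lt_iff]; constructor <;> linarith

private lemma floor_div_le {x y β : ℝ} (hβ0 : 0 < β) (h : x ≤ y + β) :
    ⌊x/β⌋ ≤ ⌊y/β⌋ + 1 := by
  have h2 : x / β ≤ y / β + 1 := by
    rw [div_add' _ _ _ hβ0.ne', div_le_div_iff₀ hβ0 hβ0]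
    nlinarith
  calc ⌊x/β⌋ ≤ ⌊y/β + 1⌋ := Int.floor_mono h2
    _ = ⌊y/β⌋ + 1 := by exact_mod_cast Int.floor_add_intCast (y/β) 1

private lemma count_le {V : Type*} {d : ℕ} (μ : V → Fin d → ℝ) (S : Set V)
    (hsep : ∀ u ∈ S, ∀ v ∈ S, u ≠ v → 1 ≤ ‖μ u - μ v‖)
    (c B : ℕ → ℝ) (hBpos : ∀ i, 0 ≤ B i)
    (hB : ∀ (i : Fin d), ∀ v ∈ S, μ v i ∈ Set.Icc (c (i:ℕ)) (c (i:ℕ) + B (i:ℕ))) :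
    (S.ncard : ℝ) ≤ ∏ i ∈ Finset.range d, (B i + 1) := by
  classical
  set f : V → (Fin d → ℤ) := fun v i => ⌊μ v i - c (i:ℕ)⌋ with hf
  set T : Finset (Fin d → ℤ) :=
    Fintype.piFinset fun i : Fin d => Finset.Icc (0:ℤ) ⌊B (i:ℕ)⌋ with hT
  have hmap : ∀ v ∈ S, f v ∈ (T : Set (Fin d → ℤ)) := by
    intro v hv
    simp only [hT, Finset.mem_coe, Fintype.mem_piFinset, Finset.mem_Icc]
    intro i
    obtain ⟨h1, h2⟩ := hB i v hv
    refine ⟨Int.floor_nonneg.mpr (by linarith), Int.floor_mono (by linarith)⟩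
  have hinj : Set.InjOn f S := by
    intro u hu v hv heq
    by_contra hne
    have hge := hsep u hu v hv hne
    have hlt : ‖μ u - μ v‖ < 1 := by
      rw [pi_norm_lt_iff one_pos]
      intro i
      have h1 : |(μ u i - c (i:ℕ)) - (μ v i - c (i:ℕ))| < 1 :=
        floor_eq_abs_lt (congrFun heq i)
      simpa [Real.norm_eq_abs, sub_sub_sub_cancel_right] using h1
    linarith
  have hcard : S.ncard ≤ T.card := by
    have := Set.ncard_le_ncard_of_injOn f hmap hinj T.finite_toSet
    rwa [Set.ncard_coe_finset] at this
  have hTcard : (T.card : ℝ) ≤ ∏ i ∈ Finset.range d, (B i + 1) := by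
    rw [hT, Fintype.card_piFinset, Finset.prod_range fun i => B i + 1]
    push_cast
    apply Finset.prod_le_prod (fun i _ => by positivity)
    intro i _
    rw [Int.card_Icc]
    have h0 : (0:ℤ) ≤ ⌊B (i:ℕ)⌋ := Int.floor_nonneg.mpr (hBpos i)
    have h1 : ((⌊B (i:ℕ)⌋ + 1 - 0).toNat : ℤ) = ⌊B (i:ℕ)⌋ + 1 - 0 :=
      Int.toNat_of_nonneg (by omega)
    have hfl : (⌊B (i:ℕ)⌋ : ℝ) ≤ B (i:ℕ) := Int.floor_le _
    have h2 : (((⌊B (i:ℕ)⌋ + 1 - 0).toNat : ℤ) : ℝ) = (⌊B (i:ℕ)⌋ : ℝ) + 1 := by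
      rw [h1]; push_cast; ring
    rw [Int.cast_natCast] at h2
    rw [h2]; linarith
  calc (S.ncard : ℝ) ≤ (T.card : ℝ) := by exact_mod_cast hcard
    _ ≤ _ := hTcard

private lemma bw_of_ncard {V : Type*} [Fintype V] [LinearOrder V] (G : SimpleGraph V) :
    ∀ (t : ℕ) (S : Set V) (r : ℕ → ℕ), S.ncard ≤ t → BakerWins G t S r := by
  intro t
  induction t with
  | zero =>
    intro S r h
    rw [BakerWins]
    exact (Set.ncard_eq_zero S.toFinite).mp (Nat.le_zero.mp h)
  | succ t ih =>
    intro S r h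
    rw [BakerWins]
    by_cases hS : S = ∅
    · exact Or.inl hS
    right; left
    have hne : S.Nonempty := Set.nonempty_iff_ne_empty.mpr hS
    obtain ⟨v, hv, hmin⟩ := Set.exists_min_image S id S.toFinite hne
    refine ⟨v, hv, hmin, ih _ _ ?_⟩
    have h1 := Set.ncard_diff_singleton_of_mem hv
    have hpos : 0 < S.ncard := (Set.ncard_pos S.toFinite).mpr hne
    omega

private lemma key {V : Type*} [Fintype V] [LinearOrder V] (G : SimpleGraph V)
    (d : ℕ) (β : ℝ) (hβ : 1 ≤ β) (μ : V → Fin d → ℝ)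
    (hsep : ∀ u v : V, u ≠ v → 1 ≤ ‖μ u - μ v‖)
    (hedge : ∀ u v : V, G.Adj u v → ‖μ u - μ v‖ ≤ β) :
    ∀ (k : ℕ), k ≤ d → ∀ (S : Set V) (r : ℕ → ℕ) (c B : ℕ → ℝ),
      (∀ i, 0 ≤ B i) →
      (∀ (i : Fin d), (i:ℕ) < d - k → ∀ v ∈ S,
        μ v i ∈ Set.Icc (c (i:ℕ)) (c (i:ℕ) + B (i:ℕ))) →
      ∀ (t : ℕ),
        ((k:ℝ) + (∏ j ∈ Finset.range k, (β * r j + 1)) *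
          ∏ i ∈ Finset.range (d - k), (B i + 1) ≤ (t:ℝ)) →
        BakerWins G t S r := by
  have hβ0 : (0:ℝ) < β := lt_of_lt_of_le one_pos hβ
  intro k
  induction k with
  | zero =>
    intro _ S r c B hBpos hB t ht
    apply bw_of_ncard
    have h1 : (S.ncard : ℝ) ≤ ∏ i ∈ Finset.range d, (B i + 1) :=
      count_le μ S (fun u _ v _ hne => hsep u v hne) c B hBpos
        (fun i v hv => hB i (by simpa using i.isLt) v hv)
    have h2 : (S.ncard : ℝ) ≤ (t:ℝ) := by
      simp only [Finset.range_zero, Finset.prod_empty, one_mul, Nat.cast_zero,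
        zero_add, Nat.sub_zero] at ht
      linarith
    exact_mod_cast h2
  | succ k ih =>
    intro hk S r c B hBpos hB t ht
    have hkd : k < d := hk
    set m : ℕ := d - (k+1) with hm
    have hmd : m < d := by omega
    have hdk : d - k = m + 1 := by omega
    have hQpos : (0:ℝ) ≤ ∏ j ∈ Finset.range (k+1), (β * r j + 1) :=
      Finset.prod_nonneg fun j _ => by positivity
    have hPpos : (0:ℝ) ≤ ∏ i ∈ Finset.range m, (B i + 1) :=
      Finset.prod_nonneg fun i _ => by linarith [hBpos i]
    have ht1 : 1 ≤ t := by
      have h0 : (0:ℝ) ≤ (k:ℝ) := Nat.cast_nonneg k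
      have hQP := mul_nonneg hQpos hPpos
      have : (1:ℝ) ≤ (t:ℝ) := by push_cast at ht; linarith
      exact_mod_cast this
    obtain ⟨t', rfl⟩ : ∃ t', t = t' + 1 := ⟨t - 1, by omega⟩
    rw [BakerWins]
    right; right
    refine ⟨fun v => ⌊μ v ⟨m, hmd⟩ / β⌋, ?_, ?_⟩
    · -- layering
      intro u hu w hw hadj
      show |⌊μ u ⟨m,hmd⟩ / β⌋ - ⌊μ w ⟨m,hmd⟩ / β⌋| ≤ 1
      have h1 : |μ u ⟨m,hmd⟩ - μ w ⟨m,hmd⟩| ≤ β :=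
        le_trans (by simpa [Real.norm_eq_abs] using norm_le_pi_norm (μ u - μ w) ⟨m,hmd⟩)
          (hedge u w hadj)
      rw [abs_le] at h1 ⊢
      constructor
      · have := floor_div_le hβ0 (show μ w ⟨m,hmd⟩ ≤ μ u ⟨m,hmd⟩ + β by linarith)
        omega
      · have := floor_div_le hβ0 (show μ u ⟨m,hmd⟩ ≤ μ w ⟨m,hmd⟩ + β by linarith)
        omega
    · intro a b hab
      apply ih (le_of_lt hkd) _ _ (Function.update c m (β * a))
        (Function.update B m (β * r 0))
      · intro i
        rcases eq_or_ne i m with h | h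
        · subst h; simp only [Function.update_self]; positivity
        · rw [Function.update_of_ne h]; exact hBpos i
      · -- box condition
        intro i hi v hv
        rw [hdk] at hi
        rcases eq_or_ne (i:ℕ) m with h | h
        · have hieq : i = ⟨m, hmd⟩ := Fin.ext h
          subst hieq
          simp only [Function.update_self]
          obtain ⟨hva, hvb⟩ := hv.2
          set x := μ v ⟨m, hmd⟩ with hx
          have hl : (a:ℝ) ≤ x / β := by
            calc (a:ℝ) ≤ (⌊x/β⌋ : ℝ) := by exact_mod_cast hva
              _ ≤ x / β := Int.floor_le _
          have hu : x / β ≤ (a:ℝ) + (r 0 : ℝ) := by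
            have h1 : x / β < (⌊x/β⌋ : ℝ) + 1 := Int.lt_floor_add_one _
            have h2 : ((⌊x/β⌋ : ℝ) + 1) ≤ ((b:ℝ) + 1) := by exact_mod_cast Int.add_le_add_right hvb 1
            have h3 : ((b:ℝ) + 1) ≤ (a:ℝ) + (r 0 : ℝ) := by exact_mod_cast hab
            linarith
          constructor
          · rw [le_div_iff₀ hβ0] at hl; linarith
          · rw [div_le_iff₀ hβ0] at hu; nlinarith
        · rw [Function.update_of_ne h, Function.update_of_ne h]
          exact hB i (by omega) v hv.1
      · -- arithmetic bound
        rw [hdk, Finset.prod_range_succ]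
        have e1 : ∏ i ∈ Finset.range m, (Function.update B m (β * r 0) i + 1)
            = ∏ i ∈ Finset.range m, (B i + 1) := by
          apply Finset.prod_congr rfl
          intro i hi
          rw [Function.update_of_ne (Finset.mem_range.mp hi).ne]
        rw [e1, Function.update_self]
        have e2 : (∏ j ∈ Finset.range (k+1), (β * r j + 1))
            = (∏ j ∈ Finset.range k, (β * r (j+1) + 1)) * (β * r 0 + 1) :=
          Finset.prod_range_succ' _ k
        rw [e2] at ht
        push_cast at ht ⊢
        nlinarith [hQpos, hPpos]


/-- If a finite simple graph `G` embeds in `ℝ^d` (with the sup norm) with distortion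
`β ≥ 1`, then for any linear order on its vertices, any sequence `r` of positive
integers and any `t ≥ d + ∏_{i=1}^d (β·r_i + 1)`, Destroyer wins the Baker game on
`(G, r)` in `t` rounds. -/
theorem stmt_10 {V : Type*} [Fintype V] [LinearOrder V] (G : SimpleGraph V)
    (d : ℕ) (hd : 1 ≤ d) (β : ℝ) (hβ : 1 ≤ β) (μ : V → (Fin d → ℝ))
    (hsep : ∀ u v : V, u ≠ v → 1 ≤ ‖μ u - μ v‖)
    (hedge : ∀ u v : V, G.Adj u v → ‖μ u - μ v‖ ≤ β)
    (r : ℕ → ℕ) (hr : ∀ i, 0 < r i) (t : ℕ)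
    (ht : (d : ℝ) + ∏ i ∈ Finset.range d, (β * r i + 1) ≤ (t : ℝ)) :
    BakerWins G t Set.univ r := by
  apply key G d β hβ μ hsep hedge d le_rfl Set.univ r (fun _ => 0) (fun _ => 0)
    (fun _ => le_rfl) ?_ t ?_
  · intro i hi
    omega
  · simpa using ht
end

section
/- Let d ≥ 1 be an integer, let G be a connected chordal ordered graph with all left-degrees at most d, let v be the smallest vertex of G, and let λ be the BFS layering of G starting from v. Then for all integers b ≥ 0 and k ≥ 1, the induced ordered subgraph G[λ⁻¹({b, b+1, …, b+k−1})] belongs to the class T_{d−1,k}. -/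
/-- The induced ordered subgraph on a set of vertices, with the inherited order. -/
noncomputable def OrderedGraph.induce (O : OrderedGraph) (S : Set O.V) : OrderedGraph where
  V := ↥S
  fin := S.toFinite.fintype
  graph := O.graph.induce S

/-- `C` is the vertex set of a connected component of `G − B`. -/
def IsComponentOf {V : Type*} (G : SimpleGraph V) (B C : Set V) : Prop :=
  ∃ x, x ∉ B ∧ C = {y | (restrictSet G Bᶜ).Reachable x y}

/-- The clique-sum class `C₁ ⊕ C₂`: ordered graphs `G` with a base `B ⊆ V(G)` such that
`G[B] ∈ C₁` and for every connected component `C` of `G − B`: `G[C] ∈ C₂`, the set of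
vertices of `B` with a neighbor in `C` induces a clique, and all its vertices are smaller
than all vertices of `C`. -/
def CliqueSum (C₁ C₂ : Set OrderedGraph) : Set OrderedGraph :=
  {O | ∃ B : Set O.V, O.induce B ∈ C₁ ∧
    ∀ C : Set O.V, IsComponentOf O.graph B C →
      O.induce C ∈ C₂ ∧
      (∀ x ∈ B, (∃ c ∈ C, O.graph.Adj x c) →
        ∀ y ∈ B, (∃ c ∈ C, O.graph.Adj y c) → x ≠ y → O.graph.Adj x y) ∧
      (∀ x ∈ B, (∃ c ∈ C, O.graph.Adj x c) → ∀ c ∈ C, x < c)}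

/-- The class `T_d` of chordal ordered graphs with all left-degrees at most `d`. -/
def Tclass (d : ℕ) : Set OrderedGraph :=
  {O | ChordalOrdered O.graph ∧ ∀ v : O.V, ({u | O.graph.Adj v u ∧ u < v}).ncard ≤ d}

/-- The classes `T_{d,k}`: `Tdr d 0` is `T_{d,1} = T_d` and
`Tdr d n = T_{d,n+1} = T_{d,n} ⊕ T_d`. -/
def Tdr (d : ℕ) : ℕ → Set OrderedGraph
  | 0 => Tclass d
  | n + 1 => CliqueSum (Tdr d n) (Tclass d)

section Og17

open SimpleGraph

variable {V : Type*}

lemma restrict_walk_mem {G : SimpleGraph V} {U : Set V} {a b : V}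
    (w : (restrictSet G U).Walk a b) (ha : a ∈ U) : b ∈ U := by
  induction w with
  | nil => exact ha
  | cons h _ ih => exact ih h.2.2

/-- `S` is a connected set of vertices. -/
def ConnSet (G : SimpleGraph V) (S : Set V) : Prop :=
  ∀ a ∈ S, ∀ b ∈ S, (restrictSet G S).Reachable a b

variable [LinearOrder V]

lemma reach_avoid {G : SimpleGraph V} (hch : ChordalOrdered G) {S : Set V} {M : V}
    (hmax : ∀ s ∈ S, s ≤ M) :
    ∀ (m : ℕ) (a b : V) (w : (restrictSet G S).Walk a b), w.length ≤ m →
      a ≠ M → b ≠ M → (restrictSet G (S \ {M})).Reachable a b := by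
  intro m
  induction m with
  | zero =>
    intro a b w hw ha hb
    cases w with
    | nil => exact Reachable.refl _
    | cons h w' => simp [SimpleGraph.Walk.length_cons] at hw
  | succ m ih =>
    intro a b w hw ha hb
    cases w with
    | nil => exact Reachable.refl _
    | @cons _ c _ h w' =>
      by_cases hc : c = M
      · subst hc
        cases w' with
        | nil => exact absurd rfl hb
        | @cons _ c2 _ h2 w'' =>
          have hc2M : c2 ≠ c := h2.1.ne'
          have hlen : w''.length ≤ m := by
            simp [SimpleGraph.Walk.length_cons] at hw; omega
          by_cases hc2 : c2 = a
          · subst hc2; exact ih c2 b w'' hlen ha hb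
          · have haM : a < c := lt_of_le_of_ne (hmax a h.2.1) ha
            have hc2MM : c2 < c := lt_of_le_of_ne (hmax c2 h2.2.2) hc2M
            have hadj : G.Adj a c2 := hch h.1.symm h2.1 haM hc2MM (Ne.symm hc2)
            have e1 : (restrictSet G (S \ {c})).Adj a c2 :=
              ⟨hadj, ⟨h.2.1, ha⟩, ⟨h2.2.2, hc2M⟩⟩
            exact e1.reachable.trans (ih c2 b w'' hlen hc2M hb)
      · have e1 : (restrictSet G (S \ {M})).Adj a c :=
          ⟨h.1, ⟨h.2.1, ha⟩, ⟨h.2.2, hc⟩⟩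
        have hlen : w'.length ≤ m := by
          simp [SimpleGraph.Walk.length_cons] at hw; omega
        exact e1.reachable.trans (ih c b w' hlen hc hb)

lemma connSet_erase {G : SimpleGraph V} (hch : ChordalOrdered G) {S : Set V} {M : V}
    (hconn : ConnSet G S) (hM : M ∈ S) (hmax : ∀ s ∈ S, s ≤ M) :
    ConnSet G (S \ {M}) := by
  intro a ha b hb
  obtain ⟨w⟩ := hconn a ha.1 b hb.1
  exact reach_avoid hch hmax w.length a b w le_rfl
    (by simpa using ha.2) (by simpa using hb.2)

lemma exists_nbr_of_conn {G : SimpleGraph V} {S : Set V} (hconn : ConnSet G S)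
    {a b : V} (ha : a ∈ S) (hb : b ∈ S) (hab : a ≠ b) : ∃ u ∈ S, G.Adj a u := by
  obtain ⟨w⟩ := hconn a ha b hb
  cases w with
  | nil => exact absurd rfl hab
  | @cons _ c _ h w' => exact ⟨c, h.2.2, h.1⟩

lemma nbr_in_erase {G : SimpleGraph V} (hch : ChordalOrdered G) {S : Set V} {M x : V}
    (hconn : ConnSet G S) (hM : M ∈ S) (hmax : ∀ s ∈ S, s ≤ M)
    (hne : (S \ {M}).Nonempty) (hx : x ∉ S) (hlt : ∀ s ∈ S, G.Adj x s → x < s)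
    (hnbr : ∃ s ∈ S, G.Adj x s) : ∃ s ∈ S \ {M}, G.Adj x s := by
  obtain ⟨s, hs, hadj⟩ := hnbr
  by_cases hsM : s = M
  · subst hsM
    obtain ⟨u0, hu0⟩ := hne
    have hMu0 : s ≠ u0 := fun he => hu0.2 (Set.mem_singleton_iff.mpr he.symm)
    obtain ⟨u, huS, huadj⟩ := exists_nbr_of_conn hconn hM hu0.1 hMu0
    have huM : u ≠ s := huadj.ne'
    have hxM : x < s := hlt s hM hadj
    have huMlt : u < s := lt_of_le_of_ne (hmax u huS) huM
    have hxu : x ≠ u := fun he => hx (he ▸ huS)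
    exact ⟨u, ⟨huS, huM⟩, hch hadj.symm huadj hxM huMlt hxu⟩
  · exact ⟨s, ⟨hs, hsM⟩, hadj⟩

lemma below_of_conn {G : SimpleGraph V} (hch : ChordalOrdered G) :
    ∀ (m : ℕ) (S : Set V), S.Finite → S.ncard ≤ m → S.Nonempty → ConnSet G S →
    ∀ x, x ∉ S → (∀ s ∈ S, G.Adj x s → x < s) → (∃ s ∈ S, G.Adj x s) →
    ∀ s ∈ S, x < s := by
  intro m
  induction m with
  | zero =>
    intro S hfin hcard hne
    have := (Set.ncard_pos hfin).mpr hne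
    omega
  | succ m ih =>
    intro S hfin hcard hne hconn x hx hlt hnbr
    obtain ⟨M, hM, hmax⟩ := Set.exists_max_image S id hfin hne
    by_cases hSe : (S \ {M}).Nonempty
    · have hconn' := connSet_erase hch hconn hM hmax
      have hpos : 0 < S.ncard := (Set.ncard_pos hfin).mpr hne
      have hcard' : (S \ {M}).ncard ≤ m := by
        rw [Set.ncard_diff_singleton_of_mem hM]; omega
      have hbelow := ih (S \ {M}) hfin.diff hcard' hSe hconn' x
        (fun h => hx h.1) (fun s hs => hlt s hs.1)
        (nbr_in_erase hch hconn hM hmax hSe hx hlt hnbr)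
      have hxM : x < M := by
        obtain ⟨u, hu⟩ := hSe
        exact lt_of_lt_of_le (hbelow u hu) (hmax u hu.1)
      intro s hs
      by_cases hsM : s = M
      · exact hsM ▸ hxM
      · exact hbelow s ⟨hs, hsM⟩
    · have hSM : ∀ s ∈ S, s = M := fun s hs =>
        by_contra fun h => hSe ⟨s, hs, h⟩
      intro s hs
      rw [hSM s hs]
      obtain ⟨s0, hs0, hadj⟩ := hnbr
      rw [hSM s0 hs0] at hadj
      exact hlt M hM hadj

lemma clique_of_conn {G : SimpleGraph V} (hch : ChordalOrdered G) :
    ∀ (m : ℕ) (S : Set V), S.Finite → S.ncard ≤ m → S.Nonempty → ConnSet G S →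
    ∀ x y, x ∉ S → y ∉ S → x ≠ y →
    (∀ s ∈ S, G.Adj x s → x < s) → (∀ s ∈ S, G.Adj y s → y < s) →
    (∃ s ∈ S, G.Adj x s) → (∃ s ∈ S, G.Adj y s) → G.Adj x y := by
  intro m
  induction m with
  | zero =>
    intro S hfin hcard hne
    have := (Set.ncard_pos hfin).mpr hne
    omega
  | succ m ih =>
    intro S hfin hcard hne hconn x y hx hy hxy hltx hlty hnx hny
    obtain ⟨M, hM, hmax⟩ := Set.exists_max_image S id hfin hne
    by_cases hSe : (S \ {M}).Nonempty
    · have hconn' := connSet_erase hch hconn hM hmax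
      have hpos : 0 < S.ncard := (Set.ncard_pos hfin).mpr hne
      have hcard' : (S \ {M}).ncard ≤ m := by
        rw [Set.ncard_diff_singleton_of_mem hM]; omega
      exact ih (S \ {M}) hfin.diff hcard' hSe hconn' x y
        (fun h => hx h.1) (fun h => hy h.1) hxy
        (fun s hs => hltx s hs.1) (fun s hs => hlty s hs.1)
        (nbr_in_erase hch hconn hM hmax hSe hx hltx hnx)
        (nbr_in_erase hch hconn hM hmax hSe hy hlty hny)
    · have hSM : ∀ s ∈ S, s = M := fun s hs =>
        by_contra fun h => hSe ⟨s, hs, h⟩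
      obtain ⟨sx, hsx, hadjx⟩ := hnx
      obtain ⟨sy, hsy, hadjy⟩ := hny
      rw [hSM sx hsx] at hadjx
      rw [hSM sy hsy] at hadjy
      exact hch hadjx.symm hadjy.symm (hltx M hM hadjx) (hlty M hM hadjy) hxy

end Og17
section Og17b

open SimpleGraph

variable {V : Type*}

lemma adj_dist_le {G : SimpleGraph V} (hconn : G.Connected) {u w : V} (h : G.Adj u w)
    (v : V) : G.dist v w ≤ G.dist v u + 1 := by
  have h1 := hconn.dist_triangle (u := v) (v := u) (w := w)
  have h2 : G.dist u w = 1 := SimpleGraph.dist_eq_one_iff_adj.mpr h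
  omega

lemma exists_pred {G : SimpleGraph V} (hconn : G.Connected) {v u : V} {l : ℕ}
    (h : G.dist v u = l + 1) : ∃ p, G.Adj u p ∧ G.dist v p = l := by
  obtain ⟨w, hw⟩ := hconn.exists_walk_length_eq_dist v u
  have hlen : w.reverse.length = l + 1 := by
    rw [SimpleGraph.Walk.length_reverse, hw, h]
  cases hwr : w.reverse with
  | nil => rw [hwr] at hlen; simp at hlen
  | @cons _ p _ h' w'' =>
    rw [hwr] at hlen
    simp [SimpleGraph.Walk.length_cons] at hlen
    have hle : G.dist v p ≤ l := by
      have h0 := SimpleGraph.dist_le w''.reverse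
      rwa [SimpleGraph.Walk.length_reverse, hlen] at h0
    have hge : l + 1 ≤ G.dist v p + 1 := by
      rw [← h]; exact adj_dist_le hconn h'.symm v
    exact ⟨p, h', by omega⟩

variable [LinearOrder V]

lemma pred_lt {G : SimpleGraph V} (hch : ChordalOrdered G) (hconn : G.Connected)
    {v : V} (hv : ∀ u, v ≤ u) :
    ∀ (l : ℕ) (u p : V), G.dist v u = l + 1 → G.Adj u p → G.dist v p = l → p < u := by
  intro l
  induction l with
  | zero =>
    intro u p hu hadj hp
    have hpv : v = p := (hconn.dist_eq_zero_iff).mp hp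
    subst hpv
    refine lt_of_le_of_ne (hv u) fun he => ?_
    rw [← he] at hu
    simp [SimpleGraph.dist_self] at hu
  | succ l ih =>
    intro u p hu hadj hp
    obtain ⟨q, hq_adj, hq⟩ := exists_pred hconn hp
    have hqp : q < p := ih p q hp hq_adj hq
    by_contra hnot
    have hup : u < p := lt_of_le_of_ne (not_lt.mp hnot)
      (fun he => by rw [he, hp] at hu; omega)
    have huq : u ≠ q := fun he => by rw [he, hq] at hu; omega
    have hadj2 : G.Adj u q := hch hadj.symm hq_adj hup hqp huq
    have := adj_dist_le hconn hadj2.symm v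
    omega

end Og17b

section Og17c

open SimpleGraph

lemma induce_graph_adj (O : OrderedGraph) (W : Set O.V) (a b : ↥W) :
    (O.induce W).graph.Adj a b ↔ O.graph.Adj ↑a ↑b := by
  simp [OrderedGraph.induce]

lemma induce_lt_iff (O : OrderedGraph) (W : Set O.V) (a b : ↥W) :
    a < b ↔ (a : O.V) < ↑b := Iff.rfl

lemma mem_Tclass_induce (O : OrderedGraph) (W : Set O.V) (d' : ℕ)
    (hch : ChordalOrdered O.graph)
    (hdeg : ∀ u, u ∈ W → ({w | w ∈ W ∧ O.graph.Adj u w ∧ w < u}).ncard ≤ d') :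
    O.induce W ∈ Tclass d' := by
  constructor
  · intro a b c h1 h2 h3 h4 h5
    exact (induce_graph_adj O W b c).mpr (hch ((induce_graph_adj O W a b).mp h1)
      ((induce_graph_adj O W a c).mp h2) h3 h4 (fun he => h5 (Subtype.val_injective he)))
  · show ∀ u : ↥W, ({w : ↥W | (O.induce W).graph.Adj u w ∧ w < u}).ncard ≤ d'
    intro u
    have himg : Subtype.val '' {w : ↥W | (O.induce W).graph.Adj u w ∧ w < u}
        = {w | w ∈ W ∧ O.graph.Adj ↑u w ∧ w < ↑u} := by
      ext w
      constructor
      · rintro ⟨⟨w', hw'⟩, ⟨hadj, hlt⟩, rfl⟩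
        exact ⟨hw', (induce_graph_adj O W _ _).mp hadj, hlt⟩
      · rintro ⟨hwW, hadj, hlt⟩
        exact ⟨⟨w, hwW⟩, ⟨(induce_graph_adj O W _ _).mpr hadj, hlt⟩, rfl⟩
    rw [← Set.ncard_image_of_injective
      {w : ↥W | (O.induce W).graph.Adj u w ∧ w < u} Subtype.val_injective, himg]
    exact hdeg ↑u u.2

lemma ncard_nbrs_in_le (O : OrderedGraph) {u : O.V} {W : Set O.V} {d : ℕ}
    (hA : ({w | O.graph.Adj u w ∧ w < u}).ncard ≤ d)
    (p : O.V) (hadj : O.graph.Adj u p) (hlt : p < u) (hpW : p ∉ W) :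
    ({w | w ∈ W ∧ O.graph.Adj u w ∧ w < u}).ncard ≤ d - 1 := by
  have hsub : {w | w ∈ W ∧ O.graph.Adj u w ∧ w < u}
      ⊆ {w | O.graph.Adj u w ∧ w < u} \ {p} := by
    rintro w ⟨hwW, hadj', hlt'⟩
    exact ⟨⟨hadj', hlt'⟩, fun he => hpW ((Set.mem_singleton_iff.mp he) ▸ hwW)⟩
  calc ({w | w ∈ W ∧ O.graph.Adj u w ∧ w < u}).ncard
      ≤ (({w | O.graph.Adj u w ∧ w < u} \ {p}) : Set O.V).ncard :=
        Set.ncard_le_ncard hsub (Set.toFinite _)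
    _ = ({w | O.graph.Adj u w ∧ w < u}).ncard - 1 :=
        Set.ncard_diff_singleton_of_mem ⟨hadj, hlt⟩
    _ ≤ d - 1 := Nat.sub_le_sub_right hA 1

end Og17c
section Og17d

open SimpleGraph

/-- An isomorphism of ordered graphs. -/
structure OGIso (O O' : OrderedGraph) where
  e : O.V ≃ O'.V
  hadj : ∀ a b : O.V, O'.graph.Adj (e a) (e b) ↔ O.graph.Adj a b
  hlt : ∀ a b : O.V, e a < e b ↔ a < b

def OGIso.symm {O O' : OrderedGraph} (φ : OGIso O O') : OGIso O' O where
  e := φ.e.symm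
  hadj a b := by
    have := φ.hadj (φ.e.symm a) (φ.e.symm b)
    simpa using this.symm
  hlt a b := by
    have := φ.hlt (φ.e.symm a) (φ.e.symm b)
    simpa using this.symm

lemma Tclass_of_iso {O O' : OrderedGraph} {d : ℕ} (φ : OGIso O O')
    (h : O ∈ Tclass d) : O' ∈ Tclass d := by
  obtain ⟨hch, hdeg⟩ := h
  constructor
  · intro a b c h1 h2 h3 h4 h5
    obtain ⟨a, rfl⟩ := φ.e.surjective a
    obtain ⟨b, rfl⟩ := φ.e.surjective b
    obtain ⟨c, rfl⟩ := φ.e.surjective c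
    rw [φ.hadj] at h1 h2 ⊢
    rw [φ.hlt] at h3 h4
    exact hch h1 h2 h3 h4 (fun he => h5 (he ▸ rfl))
  · intro u
    obtain ⟨u, rfl⟩ := φ.e.surjective u
    have himg : {w | O'.graph.Adj (φ.e u) w ∧ w < φ.e u}
        = φ.e '' {w | O.graph.Adj u w ∧ w < u} := by
      ext w
      constructor
      · intro ⟨h1, h2⟩
        obtain ⟨w, rfl⟩ := φ.e.surjective w
        exact ⟨w, ⟨(φ.hadj _ _).mp h1, (φ.hlt _ _).mp h2⟩, rfl⟩
      · rintro ⟨w, ⟨h1, h2⟩, rfl⟩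
        exact ⟨(φ.hadj _ _).mpr h1, (φ.hlt _ _).mpr h2⟩
    rw [himg, Set.ncard_image_of_injective _ φ.e.injective]
    exact hdeg u

noncomputable def OGIso.induceIso {O O' : OrderedGraph} (φ : OGIso O O') (B : Set O.V) :
    OGIso (O.induce B) (O'.induce (φ.e '' B)) where
  e := φ.e.image B
  hadj a b := φ.hadj a.1 b.1
  hlt a b := φ.hlt a.1 b.1

lemma OGIso.reach_map {O O' : OrderedGraph} (φ : OGIso O O') (B : Set O.V) (x y : O.V)
    (h : (restrictSet O.graph Bᶜ).Reachable x y) :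
    (restrictSet O'.graph (φ.e '' B)ᶜ).Reachable (φ.e x) (φ.e y) := by
  refine SimpleGraph.Reachable.map (⟨φ.e, ?_⟩ :
    (restrictSet O.graph Bᶜ) →g (restrictSet O'.graph (φ.e '' B)ᶜ)) h
  rintro a b ⟨hadj, ha, hb⟩
  refine ⟨(φ.hadj a b).mpr hadj, ?_, ?_⟩
  · rintro ⟨a', ha', heq⟩
    exact ha (φ.e.injective heq ▸ ha')
  · rintro ⟨b', hb', heq⟩
    exact hb (φ.e.injective heq ▸ hb')

lemma OGIso.reach_iff {O O' : OrderedGraph} (φ : OGIso O O') (B : Set O.V) (x y : O.V) :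
    (restrictSet O'.graph (φ.e '' B)ᶜ).Reachable (φ.e x) (φ.e y) ↔
      (restrictSet O.graph Bᶜ).Reachable x y := by
  constructor
  · intro h
    have h2 := OGIso.reach_map φ.symm (φ.e '' B) (φ.e x) (φ.e y) h
    simpa [OGIso.symm, Equiv.symm_image_image] using h2
  · exact OGIso.reach_map φ B x y

lemma isComponentOf_pullback {O O' : OrderedGraph} (φ : OGIso O O') (B : Set O.V)
    (C' : Set O'.V) (h : IsComponentOf O'.graph (φ.e '' B) C') :
    IsComponentOf O.graph B (φ.e ⁻¹' C') ∧ φ.e '' (φ.e ⁻¹' C') = C' := by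
  obtain ⟨x', hx', hCeq⟩ := h
  obtain ⟨x, rfl⟩ := φ.e.surjective x'
  refine ⟨⟨x, fun hxB => hx' ⟨x, hxB, rfl⟩, ?_⟩,
    Set.image_preimage_eq _ φ.e.surjective⟩
  ext y
  simp only [Set.mem_preimage, hCeq, Set.mem_setOf_eq]
  exact φ.reach_iff B x y

lemma CliqueSum_of_iso {C₁ C₂ : Set OrderedGraph}
    (h₁ : ∀ ⦃X Y : OrderedGraph⦄, OGIso X Y → X ∈ C₁ → Y ∈ C₁)
    (h₂ : ∀ ⦃X Y : OrderedGraph⦄, OGIso X Y → X ∈ C₂ → Y ∈ C₂)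
    {O O' : OrderedGraph} (φ : OGIso O O') (h : O ∈ CliqueSum C₁ C₂) :
    O' ∈ CliqueSum C₁ C₂ := by
  obtain ⟨B, hB, hcomp⟩ := h
  refine ⟨φ.e '' B, h₁ (φ.induceIso B) hB, ?_⟩
  intro C' hC'
  obtain ⟨hcomp', himg⟩ := isComponentOf_pullback φ B C' hC'
  obtain ⟨hmem, hclq, hord⟩ := hcomp _ hcomp'
  refine ⟨?_, ?_, ?_⟩
  · rw [← himg]
    exact h₂ (φ.induceIso _) hmem
  · rintro x' ⟨x, hx, rfl⟩ ⟨cx', hcx', hadjx'⟩ y' ⟨y, hy, rfl⟩ ⟨cy', hcy', hadjy'⟩ hne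
    rw [φ.hadj]
    refine hclq x hx ⟨φ.e.symm cx', ?_, ?_⟩ y hy ⟨φ.e.symm cy', ?_, ?_⟩
      (fun he => hne (he ▸ rfl))
    · rw [Set.mem_preimage, Equiv.apply_symm_apply]; exact hcx'
    · have h2 := φ.hadj x (φ.e.symm cx')
      simp only [Equiv.apply_symm_apply] at h2
      exact h2.mp hadjx'
    · rw [Set.mem_preimage, Equiv.apply_symm_apply]; exact hcy'
    · have h2 := φ.hadj y (φ.e.symm cy')
      simp only [Equiv.apply_symm_apply] at h2
      exact h2.mp hadjy'
  · rintro x' ⟨x, hx, rfl⟩ ⟨cx', hcx', hadjx'⟩ c' hc'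
    have hgoal : φ.e x < φ.e (φ.e.symm c') := by
      rw [φ.hlt]
      refine hord x hx ⟨φ.e.symm cx', ?_, ?_⟩ (φ.e.symm c') ?_
      · rw [Set.mem_preimage, Equiv.apply_symm_apply]; exact hcx'
      · have h2 := φ.hadj x (φ.e.symm cx')
        simp only [Equiv.apply_symm_apply] at h2
        exact h2.mp hadjx'
      · rw [Set.mem_preimage, Equiv.apply_symm_apply]; exact hc'
    rwa [Equiv.apply_symm_apply] at hgoal

lemma Tdr_of_iso (d : ℕ) :
    ∀ (n : ℕ) ⦃O O' : OrderedGraph⦄ (φ : OGIso O O'), O ∈ Tdr d n → O' ∈ Tdr d n := by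
  intro n
  induction n with
  | zero => intro O O' φ h; exact Tclass_of_iso φ h
  | succ n ih =>
    intro O O' φ h
    exact CliqueSum_of_iso (fun X Y ψ => ih ψ) (fun X Y ψ => Tclass_of_iso ψ) φ h

noncomputable def induceInduceIso (O : OrderedGraph) (S : Set O.V) (T : Set ↥S) :
    OGIso ((O.induce S).induce T) (O.induce (Subtype.val '' T)) where
  e := Equiv.Set.image Subtype.val T Subtype.val_injective
  hadj a b := Iff.rfl
  hlt a b := Iff.rfl

end Og17d
section Og17e

open SimpleGraph

lemma walk_to_ambient (O : OrderedGraph) (S : Set O.V) (U : Set ↥S) (x0 : ↥S) :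
    ∀ (x y : ↥S) (w : (restrictSet (O.induce S).graph U).Walk x y),
      (restrictSet (O.induce S).graph U).Reachable x0 x →
      (restrictSet O.graph
        (Subtype.val '' {z : ↥S |
          (restrictSet (O.induce S).graph U).Reachable x0 z})).Reachable x.1 y.1 := by
  intro x y w
  induction w with
  | nil => intro _; exact SimpleGraph.Reachable.refl _
  | @cons a z c h w' ih =>
    intro ha
    have hz : (restrictSet (O.induce S).graph U).Reachable x0 z :=
      ha.trans h.reachable
    have edge : (restrictSet O.graph
        (Subtype.val '' {z : ↥S |
          (restrictSet (O.induce S).graph U).Reachable x0 z})).Adj a.1 z.1 :=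
      ⟨h.1, ⟨a, ha, rfl⟩, ⟨z, hz, rfl⟩⟩
    exact edge.reachable.trans (ih hz)

lemma comp_facts (O : OrderedGraph) (S : Set O.V) (B C : Set ↥S)
    (hC : IsComponentOf (O.induce S).graph B C) :
    C.Nonempty ∧ (∀ y ∈ C, y ∉ B) ∧ ConnSet O.graph (Subtype.val '' C) := by
  obtain ⟨x0, hx0, rfl⟩ := hC
  refine ⟨⟨x0, SimpleGraph.Reachable.refl _⟩, ?_, ?_⟩
  · intro y hy
    obtain ⟨w⟩ := hy
    exact restrict_walk_mem w hx0
  · rintro a ⟨x, hx, rfl⟩ b ⟨y, hy, rfl⟩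
    obtain ⟨w⟩ := (Reachable.symm hx).trans hy
    exact walk_to_ambient O S Bᶜ x0 x y w hx

lemma main_aux (d : ℕ) (O : OrderedGraph) (hch : ChordalOrdered O.graph)
    (hdeg : ∀ u : O.V, ({w | O.graph.Adj u w ∧ w < u}).ncard ≤ d)
    (hconn : O.graph.Connected) (v : O.V) (hv : ∀ u, v ≤ u) :
    ∀ (n b : ℕ),
      O.induce {u | b ≤ O.graph.dist v u ∧ O.graph.dist v u ≤ b + n} ∈ Tdr (d - 1) n := by
  intro n
  induction n with
  | zero =>
    intro b
    show _ ∈ Tclass (d - 1)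
    apply mem_Tclass_induce _ _ _ hch
    intro u huW
    simp only [Set.mem_setOf_eq] at huW
    rcases Nat.eq_zero_or_pos b with hb | hb
    · subst hb
      have huv : v = u := by
        have h0 : O.graph.dist v u = 0 := by omega
        exact (hconn.dist_eq_zero_iff).mp h0
      have hsub : {w | w ∈ {u | 0 ≤ O.graph.dist v u ∧ O.graph.dist v u ≤ 0 + 0}
          ∧ O.graph.Adj u w ∧ w < u} ⊆ (∅ : Set O.V) := by
        rintro w ⟨_, _, hlt⟩
        have hlt' : w < v := by rw [huv]; exact hlt
        exact absurd hlt' (not_lt.mpr (hv w))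
      have := Set.ncard_le_ncard hsub (Set.toFinite _)
      simp only [Set.ncard_empty] at this
      omega
    · obtain ⟨m, rfl⟩ := Nat.exists_eq_succ_of_ne_zero (Nat.pos_iff_ne_zero.mp hb)
      have hud : O.graph.dist v u = m + 1 := by omega
      obtain ⟨p, hpadj, hpd⟩ := exists_pred hconn hud
      have hplt := pred_lt hch hconn hv m u p hud hpadj hpd
      have hpW : p ∉ {u | m + 1 ≤ O.graph.dist v u ∧ O.graph.dist v u ≤ m + 1 + 0} := by
        simp only [Set.mem_setOf_eq]
        omega
      exact ncard_nbrs_in_le O (hdeg u) p hpadj hplt hpW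
  | succ n ih =>
    intro b
    show _ ∈ CliqueSum (Tdr (d - 1) n) (Tclass (d - 1))
    refine ⟨{x : ↥{u | b ≤ O.graph.dist v u ∧ O.graph.dist v u ≤ b + (n + 1)} |
      O.graph.dist v x.1 ≤ b + n}, ?_, ?_⟩
    · have himg : Subtype.val ''
          {x : ↥{u | b ≤ O.graph.dist v u ∧ O.graph.dist v u ≤ b + (n + 1)} |
            O.graph.dist v x.1 ≤ b + n}
          = {u | b ≤ O.graph.dist v u ∧ O.graph.dist v u ≤ b + n} := by
        ext u
        constructor
        · rintro ⟨⟨u, huS⟩, hle, rfl⟩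
          exact ⟨huS.1, hle⟩
        · rintro ⟨h1, h2⟩
          exact ⟨⟨u, ⟨h1, by omega⟩⟩, h2, rfl⟩
      have hIH := ih b
      rw [← himg] at hIH
      exact Tdr_of_iso (d - 1) n (induceInduceIso O _ _).symm hIH
    · intro C hC
      obtain ⟨hCne, hCnB, hDconn⟩ :=
        comp_facts O {u | b ≤ O.graph.dist v u ∧ O.graph.dist v u ≤ b + (n + 1)} _ C hC
      have hlayer : ∀ y : ↥{u | b ≤ O.graph.dist v u ∧ O.graph.dist v u ≤ b + (n + 1)},
          y ∈ C → O.graph.dist v y.1 = b + (n + 1) := by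
        intro y hy
        have h1 : b ≤ O.graph.dist v y.1 ∧ O.graph.dist v y.1 ≤ b + (n + 1) := y.2
        have h2 : ¬ O.graph.dist v y.1 ≤ b + n := hCnB y hy
        omega
      have hD : ∀ u ∈ Subtype.val '' C, O.graph.dist v u = b + (n + 1) := by
        rintro u ⟨y, hy, rfl⟩
        exact hlayer y hy
      have hDne : (Subtype.val '' C).Nonempty := hCne.image _
      have hnotin : ∀ x : ↥{u | b ≤ O.graph.dist v u ∧ O.graph.dist v u ≤ b + (n + 1)},
          O.graph.dist v x.1 ≤ b + n → x.1 ∉ Subtype.val '' C := by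
        rintro x hx hmem
        have := hD x.1 hmem
        omega
      have hlts : ∀ x : ↥{u | b ≤ O.graph.dist v u ∧ O.graph.dist v u ≤ b + (n + 1)},
          O.graph.dist v x.1 ≤ b + n →
          ∀ s ∈ Subtype.val '' C, O.graph.Adj x.1 s → x.1 < s := by
        rintro x hx s hs hadj
        have hsd : O.graph.dist v s = (b + n) + 1 := by
          have := hD s hs; omega
        have hxd : O.graph.dist v x.1 = b + n := by
          have h3 := adj_dist_le hconn hadj v
          omega
        exact pred_lt hch hconn hv (b + n) s x.1 hsd hadj.symm hxd
      refine ⟨?_, ?_, ?_⟩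
      · refine Tclass_of_iso (induceInduceIso O _ C).symm ?_
        apply mem_Tclass_induce _ _ _ hch
        intro u huD
        have hud : O.graph.dist v u = (b + n) + 1 := by
          have := hD u huD; omega
        obtain ⟨p, hpadj, hpd⟩ := exists_pred hconn hud
        have hplt := pred_lt hch hconn hv (b + n) u p hud hpadj hpd
        have hpD : p ∉ Subtype.val '' C := fun hpD => by
          have := hD p hpD; omega
        exact ncard_nbrs_in_le O (hdeg u) p hpadj hplt hpD
      · intro x hx hxn y hy hyn hxy
        obtain ⟨cx, hcx, hadjx⟩ := hxn
        obtain ⟨cy, hcy, hadjy⟩ := hyn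
        have hxadj : O.graph.Adj x.1 cx.1 := hadjx
        have hyadj : O.graph.Adj y.1 cy.1 := hadjy
        exact clique_of_conn hch (Subtype.val '' C).ncard _ (Set.toFinite _) le_rfl
          hDne hDconn x.1 y.1 (hnotin x hx) (hnotin y hy)
          (fun he => hxy (Subtype.val_injective he))
          (hlts x hx) (hlts y hy)
          ⟨cx.1, ⟨cx, hcx, rfl⟩, hxadj⟩ ⟨cy.1, ⟨cy, hcy, rfl⟩, hyadj⟩
      · intro x hx hxn c hc
        obtain ⟨cx, hcx, hadjx⟩ := hxn
        have hxadj : O.graph.Adj x.1 cx.1 := hadjx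
        have hbelow := below_of_conn hch (Subtype.val '' C).ncard _ (Set.toFinite _)
          le_rfl hDne hDconn x.1 (hnotin x hx) (hlts x hx)
          ⟨cx.1, ⟨cx, hcx, rfl⟩, hxadj⟩
        exact hbelow c.1 ⟨c, hc, rfl⟩

end Og17e
/-- Let `G` be a connected chordal ordered graph with all left-degrees at most `d` (`d ≥ 1`),
`v` its smallest vertex and `λ(u) = d_G(v, u)` the BFS layering from `v`. Then for all
`b ≥ 0` and `k ≥ 1`, the induced ordered subgraph on the union of layers
`b, b+1, …, b+k−1` belongs to `T_{d−1,k}`. -/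
theorem stmt_17 (d : ℕ) (hd : 1 ≤ d) (O : OrderedGraph) (hO : O ∈ Tclass d)
    (hconn : O.graph.Connected) (v : O.V) (hv : ∀ u, v ≤ u)
    (b k : ℕ) (hk : 1 ≤ k) :
    O.induce {u | b ≤ O.graph.dist v u ∧ O.graph.dist v u ≤ b + k - 1} ∈
      Tdr (d - 1) (k - 1) := by
  obtain ⟨hch, hdeg⟩ := hO
  have h := main_aux d O hch hdeg hconn v hv (k - 1) b
  have he : b + (k - 1) = b + k - 1 := by omega
  rw [he] at h
  exact h
end

section
/- Let ℓ and r be integers with r ≥ 0 and ℓ > 4r, and let z be an integer. Then among the ℓ − 2r distinct (ℓ, r)-covers of the integers, exactly 2r covers R satisfy z ∉ ⋃_{I∈R} M_{2r}(I). -/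
/-- The middle part `M_d(I)` of the interval of length `l` with left endpoint `i`. -/
def Md (l d : ℕ) (i : ℤ) : Set ℤ := Set.Icc (i + d) (i + l - d - 1)

/-- `i` is a left endpoint of an interval of the `(l, r)`-cover with residue `n`,
i.e. `i ≡ n (mod l − 2r)`. -/
def inCover (l r : ℕ) (n i : ℤ) : Prop := ((l : ℤ) - 2 * r) ∣ (i - n)

/-- Let `l > 4r ≥ 0` and let `z` be an integer. Among the `l − 2r` distinct `(l, r)`-covers
of the integers (indexed by residues `n ∈ {0, …, l − 2r − 1}`), exactly `2r` covers `R`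
satisfy `z ∉ ⋃_{I ∈ R} M_{2r}(I)`. -/
theorem stmt_18 (l r : ℕ) (hl : 4 * r < l) (z : ℤ) :
    ({n : ℕ | n < l - 2 * r ∧
        ¬ ∃ i : ℤ, inCover l r (n : ℤ) i ∧ z ∈ Md l (2 * r) i}).ncard = 2 * r := by
  have hl' : (4 * r : ℤ) < l := by exact_mod_cast hl
  set M : ℤ := (l : ℤ) - 2 * r with hM
  have hM0 : 0 < M := by simp only [hM]; linarith
  set b : ℤ := z - 2 * r with hb
  set a : ℤ := z - l + 2 * r + 1 with ha
  have hba : b - a = M - 2 * r - 1 := by simp only [hb, ha, hM]; ring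
  have hba0 : 0 ≤ b - a := by rw [hba]; linarith
  have hbaM : b - a < M := by rw [hba]; have : (0:ℤ) ≤ r := Int.ofNat_nonneg r; linarith
  have key : ∀ n : ℤ, (∃ i : ℤ, inCover l r n i ∧ z ∈ Md l (2 * r) i) ↔ (b - n) % M ≤ b - a := by
    intro n
    constructor
    · rintro ⟨i, hdvd, hz⟩
      simp only [Md, Set.mem_Icc] at hz
      push_cast at hz
      have hib : i ≤ b := by simp only [hb]; linarith [hz.1]
      have hia : a ≤ i := by simp only [ha]; linarith [hz.2]
      have hmod : (b - n) % M = (b - i) % M := by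
        have : M ∣ (b - n) - (b - i) := by
          have : (b - n) - (b - i) = i - n := by ring
          rw [this]; exact hdvd
        exact Int.modEq_iff_dvd.mpr
          (by simpa [show (b - i) - (b - n) = -(i - n) by ring] using (dvd_neg.mpr hdvd))
      rw [hmod, Int.emod_eq_of_lt (by linarith) (by linarith)]
      linarith
    · intro h
      refine ⟨b - (b - n) % M, ?_, ?_⟩
      · show M ∣ (b - (b - n) % M - n)
        have := Int.mul_ediv_add_emod (b - n) M
        exact ⟨(b - n) / M, by linarith⟩
      · have h0 : 0 ≤ (b - n) % M := Int.emod_nonneg _ (ne_of_gt hM0)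
        simp only [Md, Set.mem_Icc]
        push_cast
        constructor
        · simp only [hb] at *; linarith
        · simp only [hb, ha, hM] at *; linarith
  have hset : {n : ℕ | n < l - 2 * r ∧
      ¬ ∃ i : ℤ, inCover l r (n : ℤ) i ∧ z ∈ Md l (2 * r) i} =
      ↑((Finset.range (l - 2 * r)).filter fun n : ℕ => b - a < (b - (n : ℤ)) % M) := by
    ext n
    simp [key, Finset.mem_filter, Finset.mem_range, not_le, and_comm]
  rw [hset, Set.ncard_coe_finset]
  have hcastM : ((l - 2 * r : ℕ) : ℤ) = M := by
    rw [hM]; push_cast [Nat.cast_sub (by omega : 2 * r ≤ l)]; ring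
  have hcast2 : ((l - 2 * r - 2 * r : ℕ) : ℤ) = M - 2 * r := by
    push_cast [Nat.cast_sub (by omega : 2 * r ≤ l - 2 * r), Nat.cast_sub (by omega : 2 * r ≤ l)]
    ring
  conv_rhs => rw [show 2 * r = (Finset.Ico (l - 2 * r - 2 * r) (l - 2 * r)).card by
    rw [Nat.card_Ico]; omega]
  refine Finset.card_bij (fun (n : ℕ) (_ : n ∈ (Finset.range (l - 2 * r)).filter
      fun n : ℕ => b - a < (b - (n : ℤ)) % M) => ((b - (n : ℤ)) % M).toNat) ?_ ?_ ?_
  · intro n hn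
    simp only [Finset.mem_filter, Finset.mem_range] at hn
    have h0 : 0 ≤ (b - (n : ℤ)) % M := Int.emod_nonneg _ (ne_of_gt hM0)
    have h1 : (b - (n : ℤ)) % M < M := Int.emod_lt_of_pos _ hM0
    have h2 : b - a < (b - (n : ℤ)) % M := hn.2
    rw [hba] at h2
    simp only [Finset.mem_Ico]
    omega
  · intro n1 hn1 n2 hn2 heq
    simp only [Finset.mem_filter, Finset.mem_range] at hn1 hn2
    have h01 : 0 ≤ (b - (n1 : ℤ)) % M := Int.emod_nonneg _ (ne_of_gt hM0)
    have h02 : 0 ≤ (b - (n2 : ℤ)) % M := Int.emod_nonneg _ (ne_of_gt hM0)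
    have heq' : (b - (n1 : ℤ)) % M = (b - (n2 : ℤ)) % M := by omega
    have hdvd : M ∣ ((n1 : ℤ) - n2) := by
      have := Int.ModEq.dvd (heq' : (b - (n1:ℤ)) ≡ (b - (n2:ℤ)) [ZMOD M])
      simpa [show (b - (n2:ℤ)) - (b - (n1:ℤ)) = (n1:ℤ) - n2 by ring] using this
    have hn1' : (n1 : ℤ) < M := by
      calc (n1 : ℤ) < ((l - 2 * r : ℕ) : ℤ) := by exact_mod_cast hn1.1
        _ = M := hcastM
    have hn2' : (n2 : ℤ) < M := by
      calc (n2 : ℤ) < ((l - 2 * r : ℕ) : ℤ) := by exact_mod_cast hn2.1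
        _ = M := hcastM
    have : (n1 : ℤ) - n2 = 0 := Int.eq_zero_of_abs_lt_dvd hdvd (by
      rw [abs_lt]
      constructor <;> [linarith [Int.ofNat_nonneg n1]; linarith [Int.ofNat_nonneg n2]])
    omega
  · intro k hk
    simp only [Finset.mem_Ico] at hk
    have hkM : (k : ℤ) < M := by
      calc (k : ℤ) < ((l - 2 * r : ℕ) : ℤ) := by exact_mod_cast hk.2
        _ = M := hcastM
    have hkM2 : M - 2 * r ≤ (k : ℤ) := by
      calc M - 2 * r = ((l - 2 * r - 2 * r : ℕ) : ℤ) := hcast2.symm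
        _ ≤ (k : ℤ) := by exact_mod_cast hk.1
    refine ⟨((b - (k : ℤ)) % M).toNat, ?_, ?_⟩
    · have h0 : 0 ≤ (b - (k : ℤ)) % M := Int.emod_nonneg _ (ne_of_gt hM0)
      have h1 : (b - (k : ℤ)) % M < M := Int.emod_lt_of_pos _ hM0
      have hcast : ((((b - (k : ℤ)) % M).toNat : ℤ)) = (b - (k : ℤ)) % M := Int.toNat_of_nonneg h0
      have hmem : (((b - (k : ℤ)) % M).toNat) < l - 2 * r := by
        have : ((((b - (k : ℤ)) % M).toNat : ℤ)) < ((l - 2 * r : ℕ) : ℤ) := by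
          rw [hcast, hcastM]; exact h1
        exact_mod_cast this
      have hbn : (b - (((b - (k : ℤ)) % M).toNat : ℤ)) % M = (k : ℤ) := by
        rw [hcast]
        have : (b - (b - (k:ℤ)) % M) % M = (k : ℤ) % M := by
          have hdvd : M ∣ (b - (b - (k:ℤ)) % M) - (k : ℤ) := by
            have := Int.mul_ediv_add_emod (b - (k:ℤ)) M
            exact ⟨(b - (k:ℤ)) / M, by linarith⟩
          exact Int.ModEq.symm (Int.modEq_iff_dvd.mpr (by simpa using hdvd))
        rw [this, Int.emod_eq_of_lt (Int.ofNat_nonneg k) hkM]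
      simp only [Finset.mem_filter, Finset.mem_range]
      refine ⟨hmem, ?_⟩
      rw [hbn, hba]; linarith
    · have h0 : 0 ≤ (b - (k : ℤ)) % M := Int.emod_nonneg _ (ne_of_gt hM0)
      have hcast : ((((b - (k : ℤ)) % M).toNat : ℤ)) = (b - (k : ℤ)) % M := Int.toNat_of_nonneg h0
      have hbn : (b - (((b - (k : ℤ)) % M).toNat : ℤ)) % M = (k : ℤ) := by
        rw [hcast]
        have : (b - (b - (k:ℤ)) % M) % M = (k : ℤ) % M := by
          have hdvd : M ∣ (b - (b - (k:ℤ)) % M) - (k : ℤ) := by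
            have := Int.mul_ediv_add_emod (b - (k:ℤ)) M
            exact ⟨(b - (k:ℤ)) / M, by linarith⟩
          exact Int.ModEq.symm (Int.modEq_iff_dvd.mpr (by simpa using hdvd))
        rw [this, Int.emod_eq_of_lt (Int.ofNat_nonneg k) hkM]
      show ((b - (((b - (k : ℤ)) % M).toNat : ℤ)) % M).toNat = k
      rw [hbn]; simp
end
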